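/- Let k be a field of odd prime characteristic p, let q ∈ k^× be arbitrary, and let A = k⟨x,y⟩/(x^p, y^p, yx − q·xy), which has k-basis the monomials x^i y^j with 0 ≤ i,j ≤ p−1. If there exists a k-linear form s : A → k with s(ab) = s(ba) for all a,b ∈ A whose kernel contains no nonzero two-sided ideal of A (in particular, if A is a symmetric algebra), then q^{p−1} = 1; equivalently, the multiplicative order of q divides p−1. -/

import Mathlib

/-- Remark: let `A = k⟨x,y⟩/(x^p, y^p, yx − q·xy)` for an arbitrary `q ∈ k^×`, over a
field `k` of odd prime characteristic `p`.  If `A` admits a `k`-linear form `s` with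
`s(ab) = s(ba)` whose kernel contains no nonzero two-sided ideal (in particular, if `A` is
a symmetric algebra), then `q^{p−1} = 1`, i.e. the multiplicative order of `q` divides
`p − 1`. -/
theorem symmetric_quantum_complete_intersection_order_dvd
    (k : Type*) [Field k] (p : ℕ) (q : k)
    (hp : p.Prime) (hodd : Odd p) (hchar : CharP k p) (hq0 : q ≠ 0)
    (A : Type*) [Ring A] [Algebra k A] (x y : A)
    (hx : x ^ p = 0) (hy : y ^ p = 0) (hyx : y * x = q • (x * y))
    (b : Module.Basis (Fin p × Fin p) k A)
    (hb : ∀ ij : Fin p × Fin p, b ij = x ^ (ij.1 : ℕ) * y ^ (ij.2 : ℕ))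
    (hsym : ∃ s : A →ₗ[k] k, (∀ a b : A, s (a * b) = s (b * a)) ∧
      ∀ I : Ideal A, (∀ a ∈ I, ∀ c : A, a * c ∈ I) → (∀ a ∈ I, s a = 0) → I = ⊥) :
    q ^ (p - 1) = 1 ∧ orderOf q ∣ p - 1 := by
  obtain ⟨s, strace, sideal⟩ := hsym
  have hp0 : 0 < p := hp.pos
  have hp3 : 3 ≤ p := by
    have h2 := hp.two_le
    have := Nat.odd_iff.mp hodd
    omega
  -- commutation relations
  have hyx1 : ∀ n : ℕ, y * x ^ n = q ^ n • (x ^ n * y) := by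
    intro n
    induction n with
    | zero => simp
    | succ n ih =>
      rw [pow_succ, ← mul_assoc, ih, smul_mul_assoc, mul_assoc, hyx, mul_smul_comm,
        smul_smul, ← pow_succ, ← mul_assoc]
  have hyxmn : ∀ m n : ℕ, y ^ m * x ^ n = q ^ (m * n) • (x ^ n * y ^ m) := by
    intro m n
    induction m with
    | zero => simp
    | succ m ih =>
      rw [pow_succ, mul_assoc, hyx1, mul_smul_comm, ← mul_assoc, ih, smul_mul_assoc,
        smul_smul, ← pow_add, mul_assoc, ← pow_succ]
      ring_nf
  have hxp1 : ∀ i : ℕ, 1 ≤ i → x ^ (i + (p - 1)) = 0 := by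
    intro i hi
    have h : i + (p - 1) = p + (i - 1) := by omega
    rw [h, pow_add, hx, zero_mul]
  have hyp1 : ∀ j : ℕ, 1 ≤ j → y ^ (j + (p - 1)) = 0 := by
    intro j hj
    have h : j + (p - 1) = p + (j - 1) := by omega
    rw [h, pow_add, hy, zero_mul]
  set z : A := x ^ (p - 1) * y ^ (p - 1) with hzdef
  have hzne : z ≠ 0 := by
    have hb' := hb (⟨p - 1, by omega⟩, ⟨p - 1, by omega⟩)
    simp only at hb'
    have hne := b.ne_zero ((⟨p - 1, by omega⟩, ⟨p - 1, by omega⟩) : Fin p × Fin p)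
    rw [hb'] at hne
    exact hne
  have hmulz : ∀ i j : ℕ, (x ^ i * y ^ j) * z
      = q ^ (j * (p - 1)) • (x ^ (i + (p - 1)) * y ^ (j + (p - 1))) := by
    intro i j
    calc x ^ i * y ^ j * (x ^ (p - 1) * y ^ (p - 1))
        = x ^ i * ((y ^ j * x ^ (p - 1)) * y ^ (p - 1)) := by
          rw [mul_assoc, mul_assoc]
      _ = q ^ (j * (p - 1)) • (x ^ i * (x ^ (p - 1) * (y ^ j * y ^ (p - 1)))) := by
          rw [hyxmn, smul_mul_assoc, mul_smul_comm, mul_assoc]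
      _ = q ^ (j * (p - 1)) • (x ^ (i + (p - 1)) * y ^ (j + (p - 1))) := by
          rw [← mul_assoc, ← pow_add, ← pow_add]
  have hzmul : ∀ i j : ℕ, z * (x ^ i * y ^ j)
      = q ^ ((p - 1) * i) • (x ^ (i + (p - 1)) * y ^ (j + (p - 1))) := by
    intro i j
    calc x ^ (p - 1) * y ^ (p - 1) * (x ^ i * y ^ j)
        = x ^ (p - 1) * ((y ^ (p - 1) * x ^ i) * y ^ j) := by
          rw [mul_assoc, mul_assoc]
      _ = q ^ ((p - 1) * i) • (x ^ (p - 1) * (x ^ i * (y ^ (p - 1) * y ^ j))) := by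
          rw [hyxmn, smul_mul_assoc, mul_smul_comm, mul_assoc]
      _ = q ^ ((p - 1) * i) • (x ^ (i + (p - 1)) * y ^ (j + (p - 1))) := by
          rw [← mul_assoc, ← pow_add, ← pow_add, Nat.add_comm (p - 1) i,
            Nat.add_comm (p - 1) j]
  set e0 : Fin p × Fin p := (⟨0, hp0⟩, ⟨0, hp0⟩) with he0
  have hbe0 : b e0 = 1 := by
    have := hb e0
    simpa [he0] using this
  have hbz0 : ∀ ij : Fin p × Fin p, ij ≠ e0 → b ij * z = 0 := by
    intro ij hne
    rw [hb, hmulz]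
    have hcases : 1 ≤ (ij.1 : ℕ) ∨ 1 ≤ (ij.2 : ℕ) := by
      by_contra h
      push_neg at h
      apply hne
      have h1 : (ij.1 : ℕ) = 0 := by omega
      have h2 : (ij.2 : ℕ) = 0 := by omega
      rw [he0, Prod.ext_iff]
      constructor <;> [exact Fin.ext h1; exact Fin.ext h2]
    rcases hcases with h | h
    · rw [hxp1 _ h, zero_mul, smul_zero]
    · rw [hyp1 _ h, mul_zero, smul_zero]
  have hzb0 : ∀ ij : Fin p × Fin p, ij ≠ e0 → z * b ij = 0 := by
    intro ij hne
    rw [hb, hzmul]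
    have hcases : 1 ≤ (ij.1 : ℕ) ∨ 1 ≤ (ij.2 : ℕ) := by
      by_contra h
      push_neg at h
      apply hne
      have h1 : (ij.1 : ℕ) = 0 := by omega
      have h2 : (ij.2 : ℕ) = 0 := by omega
      rw [he0, Prod.ext_iff]
      constructor <;> [exact Fin.ext h1; exact Fin.ext h2]
    rcases hcases with h | h
    · rw [hxp1 _ h, zero_mul, smul_zero]
    · rw [hyp1 _ h, mul_zero, smul_zero]
  have hkeyR : ∀ a : A, a * z = b.repr a e0 • z := by
    intro a
    conv_lhs => rw [← b.sum_repr a]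
    rw [Finset.sum_mul, Finset.sum_eq_single e0]
    · rw [smul_mul_assoc, hbe0, one_mul]
    · intro ij _ hne
      rw [smul_mul_assoc, hbz0 ij hne, smul_zero]
    · intro h
      exact absurd (Finset.mem_univ e0) h
  have hkeyL : ∀ a : A, z * a = b.repr a e0 • z := by
    intro a
    conv_lhs => rw [← b.sum_repr a]
    rw [Finset.mul_sum, Finset.sum_eq_single e0]
    · rw [mul_smul_comm, hbe0, mul_one]
    · intro ij _ hne
      rw [mul_smul_comm, hzb0 ij hne, smul_zero]
    · intro h
      exact absurd (Finset.mem_univ e0) h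
  -- s z ≠ 0
  have hszne : s z ≠ 0 := by
    intro h0
    have hI : Ideal.span {z} = (⊥ : Ideal A) := by
      apply sideal
      · intro a ha c
        obtain ⟨d, hd⟩ := Submodule.mem_span_singleton.mp ha
        rw [smul_eq_mul] at hd
        apply Submodule.mem_span_singleton.mpr
        refine ⟨algebraMap k A (b.repr c e0) * d, ?_⟩
        rw [smul_eq_mul, mul_assoc, hd, ← Algebra.smul_def, ← hd, mul_assoc, hkeyL c,
          mul_smul_comm, hd]
      · intro a ha
        obtain ⟨d, hd⟩ := Submodule.mem_span_singleton.mp ha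
        rw [smul_eq_mul] at hd
        rw [← hd, hkeyR, map_smul, h0, smul_zero]
    have hzmem : z ∈ Ideal.span ({z} : Set A) := Ideal.subset_span rfl
    rw [hI] at hzmem
    exact hzne (Submodule.mem_bot A |>.mp hzmem)
  -- the trace computation
  have hfact : z = (x ^ (p - 1) * y ^ (p - 2)) * y := by
    rw [mul_assoc, ← pow_succ]
    have : p - 2 + 1 = p - 1 := by omega
    rw [this]
  have h1 : y * (x ^ (p - 1) * y ^ (p - 2)) = q ^ (p - 1) • z := by
    rw [← mul_assoc, hyx1, smul_mul_assoc, mul_assoc]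
    have : y * y ^ (p - 2) = y ^ (p - 1) := by
      rw [← pow_succ']
      congr 1
      omega
    rw [this]
  have heq : s z = q ^ (p - 1) * s z := by
    conv_lhs => rw [hfact, strace]
    rw [h1, map_smul, smul_eq_mul]
  have hq1 : q ^ (p - 1) = 1 := by
    have h := heq
    nth_rewrite 1 [← one_mul (s z)] at h
    exact (mul_right_cancel₀ hszne h).symm
  exact ⟨hq1, orderOf_dvd_of_pow_eq_one hq1⟩
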